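/- Let n ≥ 1 and let f and g be Hermitian complex n×n matrices. Define W(h) = −log Re trace(exp(−h)) for Hermitian h, and Z = Re trace(exp(−f)). Then the Gibbs–Bogoliubov inequality holds: W(g) ≤ W(f) + Z⁻¹ · Re trace(exp(−f)·(g − f)). -/

import Mathlib

open Matrix


lemma exp_jensen {m : ℕ} (w t : Fin m → ℝ) (hw : ∀ j, 0 ≤ w j) (hw1 : ∑ j, w j = 1) :
    Real.exp (∑ j, w j * t j) ≤ ∑ j, w j * Real.exp (t j) := by
  have := convexOn_exp.map_sum_le (t := Finset.univ) (w := w) (p := t)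
    (fun i _ => hw i) hw1 (fun i _ => Set.mem_univ _)
  simpa [smul_eq_mul] using this

lemma conj_diag_entry {n : ℕ} (W : Matrix (Fin n) (Fin n) ℂ) (d : Fin n → ℝ) (i : Fin n) :
    ((star W * diagonal (fun j => (d j : ℂ)) * W) i i).re
      = ∑ j, Complex.normSq (W j i) * d j := by
  have h : (star W * diagonal (fun j => (d j : ℂ)) * W) i i
      = ∑ j, ((Complex.normSq (W j i) * d j : ℝ) : ℂ) := by
    simp only [Matrix.mul_apply, Matrix.star_apply, Matrix.diagonal_apply, Finset.sum_mul,
      Finset.mul_sum]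
    rw [Finset.sum_comm]
    refine Finset.sum_congr rfl fun j _ => ?_
    simp [Finset.sum_ite_eq, mul_comm, mul_left_comm, Complex.mul_conj']
    rw [mul_left_comm, Complex.mul_conj]
  rw [h, Complex.re_sum]
  simp

lemma trace_mul_diag {n : ℕ} (N : Matrix (Fin n) (Fin n) ℂ) (d : Fin n → ℂ) :
    Matrix.trace (N * diagonal d) = ∑ i, N i i * d i := by
  simp [Matrix.trace, Matrix.diag, Matrix.mul_apply, Matrix.diagonal_apply]

lemma trace_conj_mul {n : ℕ} (U D M : Matrix (Fin n) (Fin n) ℂ) :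
    Matrix.trace (U * D * star U * M) = Matrix.trace (star U * M * U * D) := by
  calc Matrix.trace (U * D * star U * M) = Matrix.trace ((U * D) * (star U * M)) := by
        rw [Matrix.mul_assoc]
    _ = Matrix.trace ((star U * M) * (U * D)) := Matrix.trace_mul_comm _ _
    _ = Matrix.trace (star U * M * U * D) := by rw [← Matrix.mul_assoc]

lemma exp_neg_hermitian {n : ℕ} (h : Matrix (Fin n) (Fin n) ℂ) (hh : h.IsHermitian) :
    NormedSpace.exp (-h)
      = (hh.eigenvectorUnitary : Matrix (Fin n) (Fin n) ℂ)
        * diagonal (fun i => (Real.exp (-hh.eigenvalues i) : ℂ))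
        * star (hh.eigenvectorUnitary : Matrix (Fin n) (Fin n) ℂ) := by
  set U := (hh.eigenvectorUnitary : Matrix (Fin n) (Fin n) ℂ) with hUdef
  have hU1 : U * star U = 1 := (Matrix.mem_unitaryGroup_iff).mp hh.eigenvectorUnitary.2
  have hU2 : star U * U = 1 := (Matrix.mem_unitaryGroup_iff').mp hh.eigenvectorUnitary.2
  have hdneg : diagonal (fun i => (-(hh.eigenvalues i) : ℂ))
      = -diagonal (RCLike.ofReal ∘ hh.eigenvalues) := by
    rw [← diagonal_neg]; rfl
  have hspec : U * diagonal (fun i => (-(hh.eigenvalues i) : ℂ)) * star U = -h := by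
    rw [hdneg, Matrix.mul_neg, Matrix.neg_mul]
    exact congrArg Neg.neg hh.spectral_theorem.symm
  let Uu : (Matrix (Fin n) (Fin n) ℂ)ˣ := ⟨U, star U, hU1, hU2⟩
  have key := Matrix.exp_units_conj Uu (diagonal (fun i => (-(hh.eigenvalues i) : ℂ)))
  have hinv : ((Uu⁻¹ : _ˣ) : Matrix (Fin n) (Fin n) ℂ) = star U := rfl
  rw [hinv] at key
  change NormedSpace.exp (U * _ * star U) = U * _ * star U at key
  rw [hspec] at key
  rw [key, Matrix.exp_diagonal]
  congr 2
  funext i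
  rw [Pi.exp_def, ← Complex.exp_eq_exp_ℂ]
  push_cast
  simp

/-- The generating functional `W(h) = -log Re tr(exp(-h))` of a Hermitian matrix `h`. -/
noncomputable def genFunctional {n : ℕ} (h : Matrix (Fin n) (Fin n) ℂ) : ℝ :=
  -Real.log ((Matrix.trace (NormedSpace.exp (-h))).re)

/-- The Gibbs–Bogoliubov inequality
`W(g) ≤ W(f) + Z⁻¹ · Re tr(exp(-f)·(g - f))`, where `Z = Re tr(exp(-f))`. -/
theorem gibbs_bogoliubov_inequality
    {n : ℕ} (hn : 1 ≤ n)
    (f g : Matrix (Fin n) (Fin n) ℂ)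
    (hf : f.IsHermitian) (hg : g.IsHermitian) :
    genFunctional g
      ≤ genFunctional f
        + ((Matrix.trace (NormedSpace.exp (-f))).re)⁻¹
          * (Matrix.trace (NormedSpace.exp (-f) * (g - f))).re := by
  classical
  haveI : NeZero n := ⟨Nat.one_le_iff_ne_zero.mp hn⟩
  set U := (hf.eigenvectorUnitary : Matrix (Fin n) (Fin n) ℂ) with hUdef
  set V := (hg.eigenvectorUnitary : Matrix (Fin n) (Fin n) ℂ) with hVdef
  set lam := hf.eigenvalues with hlamdef
  set mu := hg.eigenvalues with hmudef
  have hU1 : U * star U = 1 := (Matrix.mem_unitaryGroup_iff).mp hf.eigenvectorUnitary.2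
  have hU2 : star U * U = 1 := (Matrix.mem_unitaryGroup_iff').mp hf.eigenvectorUnitary.2
  have hV1 : V * star V = 1 := (Matrix.mem_unitaryGroup_iff).mp hg.eigenvectorUnitary.2
  have hV2 : star V * V = 1 := (Matrix.mem_unitaryGroup_iff').mp hg.eigenvectorUnitary.2
  set W := star V * U with hWdef
  have hW2 : star W * W = 1 := by
    rw [hWdef, Matrix.star_mul, star_star, Matrix.mul_assoc, ← Matrix.mul_assoc V, hV1,
      Matrix.one_mul, hU2]
  have hcol : ∀ i, ∑ j, Complex.normSq (W j i) = 1 := by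
    intro i
    have h1 : (star W * W) i i = 1 := by rw [hW2]; simp
    have h2 : (star W * W) i i = ∑ j, ((Complex.normSq (W j i) : ℝ) : ℂ) := by
      simp only [Matrix.mul_apply, Matrix.star_apply]
      refine Finset.sum_congr rfl fun j _ => ?_
      rw [mul_comm, Complex.star_def, Complex.mul_conj]
    rw [h2] at h1
    have := congrArg Complex.re h1
    rw [Complex.re_sum] at this
    simpa using this
  set Z : ℝ := ∑ i, Real.exp (-lam i) with hZdef
  have hZpos : 0 < Z := Finset.sum_pos (fun i _ => Real.exp_pos _) Finset.univ_nonempty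
  set p : Fin n → ℝ := fun i => Real.exp (-lam i) / Z with hpdef
  have hppos : ∀ i, 0 < p i := fun i => div_pos (Real.exp_pos _) hZpos
  have hpsum : ∑ i, p i = 1 := by
    rw [hpdef]; rw [← Finset.sum_div]; exact div_self (ne_of_gt hZpos)
  set c : Fin n → ℝ := fun i => ((star U * g * U) i i).re with hcdef
  have hef := exp_neg_hermitian f hf
  have heg := exp_neg_hermitian g hg
  have hZre : (Matrix.trace (NormedSpace.exp (-f))).re = Z := by
    rw [hef, Matrix.trace_mul_cycle, hU2, Matrix.one_mul, Matrix.trace_diagonal, Complex.re_sum]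
    rw [hZdef]
    exact Finset.sum_congr rfl fun i _ => Complex.ofReal_re _
  have hfdiag : star U * f * U = diagonal (RCLike.ofReal ∘ lam) :=
    by
      have h := hf.conjStarAlgAut_star_eigenvectorUnitary
      simp only [Unitary.conjStarAlgAut_apply, Unitary.coe_star, star_star] at h
      exact h
  have hT : (Matrix.trace (NormedSpace.exp (-f) * (g - f))).re
      = ∑ i, Real.exp (-lam i) * (c i - lam i) := by
    rw [hef, trace_conj_mul, trace_mul_diag, Complex.re_sum]
    refine Finset.sum_congr rfl fun i _ => ?_
    have hsub : (star U * (g - f) * U) i i = (star U * g * U) i i - (star U * f * U) i i := by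
      simp [Matrix.mul_sub, Matrix.sub_mul]
    rw [hsub, hfdiag,
      show diagonal (RCLike.ofReal ∘ lam) = diagonal (fun j => ((lam j : ℝ) : ℂ)) from rfl,
      Matrix.diagonal_apply_eq]
    simp only [hcdef, Complex.mul_re, Complex.sub_re, Complex.sub_im, Complex.ofReal_re,
      Complex.ofReal_im]
    ring
  have hPeierls : ∀ i, Real.exp (-(c i)) ≤ ((star U * NormedSpace.exp (-g) * U) i i).re := by
    intro i
    have hform : star U * NormedSpace.exp (-g) * U
        = star W * diagonal (fun j => (Real.exp (-mu j) : ℂ)) * W := by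
      rw [heg, hWdef, Matrix.star_mul, star_star]
      simp only [Matrix.mul_assoc]
      rfl
    have hgform : star U * g * U = star W * diagonal (fun j => ((mu j : ℝ) : ℂ)) * W := by
      conv_lhs => rw [hg.spectral_theorem]
      rw [hWdef, Matrix.star_mul, star_star]
      have hd : diagonal (RCLike.ofReal ∘ mu) = diagonal (fun j => ((mu j : ℝ) : ℂ)) := rfl
      rw [hd]
      simp only [Unitary.conjStarAlgAut_apply, Unitary.coe_star, Matrix.mul_assoc]
      rfl
    have hc : c i = ∑ j, Complex.normSq (W j i) * mu j := by
      simp only [hcdef]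
      rw [hgform]
      exact conj_diag_entry W mu i
    rw [hform, conj_diag_entry]
    have hnc : -(c i) = ∑ j, Complex.normSq (W j i) * (-mu j) := by
      rw [hc, ← Finset.sum_neg_distrib]
      exact Finset.sum_congr rfl fun j _ => by ring
    rw [hnc]
    exact exp_jensen _ _ (fun j => Complex.normSq_nonneg _) (hcol i)
  have htrg : (Matrix.trace (NormedSpace.exp (-g))).re
      = ∑ i, ((star U * NormedSpace.exp (-g) * U) i i).re := by
    have h1 : Matrix.trace (star U * NormedSpace.exp (-g) * U)
        = Matrix.trace (NormedSpace.exp (-g)) := by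
      rw [Matrix.trace_mul_cycle, hU1, Matrix.one_mul]
    rw [← h1, Matrix.trace, Complex.re_sum]
    rfl
  set S : ℝ := ∑ i, p i * (lam i - c i) with hSdef
  have hchain : Z * Real.exp S ≤ (Matrix.trace (NormedSpace.exp (-g))).re := by
    have step1 : ∑ i, Real.exp (-(c i)) ≤ (Matrix.trace (NormedSpace.exp (-g))).re := by
      rw [htrg]
      exact Finset.sum_le_sum fun i _ => hPeierls i
    have hj := exp_jensen p (fun i => lam i - c i) (fun i => (hppos i).le) hpsum
    have step2 : Z * Real.exp S ≤ ∑ i, Real.exp (-(c i)) := by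
      calc Z * Real.exp S ≤ Z * ∑ i, p i * Real.exp (lam i - c i) :=
            mul_le_mul_of_nonneg_left hj hZpos.le
        _ = ∑ i, Real.exp (-(c i)) := by
            rw [Finset.mul_sum]
            refine Finset.sum_congr rfl fun i _ => ?_
            have he : Z * (p i * Real.exp (lam i - c i))
                = Real.exp (-lam i) * Real.exp (lam i - c i) := by
              simp only [hpdef]
              field_simp
            rw [he, ← Real.exp_add]
            congr 1
            ring
    linarith
  have hlog : Real.log Z + S ≤ Real.log ((Matrix.trace (NormedSpace.exp (-g))).re) := by
    have := Real.log_le_log (by positivity) hchain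
    rwa [Real.log_mul (ne_of_gt hZpos) (ne_of_gt (Real.exp_pos _)), Real.log_exp] at this
  simp only [genFunctional]
  rw [hZre, hT]
  have hfinal : Z⁻¹ * ∑ i, Real.exp (-lam i) * (c i - lam i) = -S := by
    rw [hSdef, Finset.mul_sum, ← Finset.sum_neg_distrib]
    refine Finset.sum_congr rfl fun i _ => ?_
    simp only [hpdef]
    field_simp
    ring
  rw [hfinal]
  linarith
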